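/- Circular increase-rate comparison: fix k, p ∈ ℤ_k, i ∈ ℤ_k, and let γ = ⌈((i − p) mod k)/(α − 1)⌉ with α > 1. For any s ∈ ℤ_k with (s − i) mod k ≥ γ and s in the cyclic interval [i + γ, p − 1], we have (s − p) mod k ≤ α · ((s − i) mod k). -/
import Mathlib


/-- circular increase-rate comparison. With
`γ = ⌈((i − p) mod k)/(α − 1)⌉`, if `(s − i) mod k ≥ γ` and `s̄` lies in the
cyclic interval `⟦i + γ, p − 1⟧`, then `(s − p) mod k ≤ α · ((s − i) mod k)`. -/
theorem circular_rate_comparison (k : ℤ) (hk : 0 < k) (α : ℝ) (hα : 1 < α)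
    (p i s : ℤ) (γ : ℤ)
    (hγ : γ = ⌈(((i - p) % k : ℤ) : ℝ) / (α - 1)⌉)
    (h1 : γ ≤ (s - i) % k)
    (h2 : if (i + γ) % k ≤ (p - 1) % k
      then (i + γ) % k ≤ s % k ∧ s % k ≤ (p - 1) % k
      else s % k ≤ (p - 1) % k ∨ (i + γ) % k ≤ s % k) :
    (((s - p) % k : ℤ) : ℝ) ≤ α * (((s - i) % k : ℤ) : ℝ) := by
  set a : ℤ := (s - i) % k with ha
  set b : ℤ := (i - p) % k with hb
  set c : ℤ := (s - p) % k with hc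
  have hkne : k ≠ 0 := hk.ne'
  -- integer fact: c ≤ a + b
  have key : c ≤ a + b := by
    have h3 : c = (a + b) % k := by
      rw [ha, hb, hc, show s - p = (s - i) + (i - p) by ring, Int.add_emod]
    have h4 : 0 ≤ a := Int.emod_nonneg _ hkne
    have h5 : 0 ≤ b := Int.emod_nonneg _ hkne
    have h6 : (a + b) % k ≤ a + b := by
      rcases lt_or_ge (a + b) k with h | h
      · rw [Int.emod_eq_of_lt (by omega) h]
      · exact le_trans (Int.emod_lt_of_pos _ hk).le h
    omega
  -- real fact: b ≤ (α - 1) * γ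
  have hα1 : (0:ℝ) < α - 1 := by linarith
  have hceil : ((b : ℝ) / (α - 1)) ≤ (γ : ℝ) := by
    rw [hγ]; exact_mod_cast Int.le_ceil _
  have hbγ : (b : ℝ) ≤ (α - 1) * (γ : ℝ) := by
    rw [div_le_iff₀ hα1] at hceil; linarith
  have hγa : (γ : ℝ) ≤ (a : ℝ) := by exact_mod_cast h1
  have hca : (c : ℝ) ≤ (a : ℝ) + (b : ℝ) := by exact_mod_cast key
  nlinarith [hca, hbγ, hγa]
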